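/- Let m be a positive integer and let X be a ±1 sequence of length 4m² such that P_X(k) = 0 for every k with 1 ≤ k ≤ 4m² - 1 (i.e., X is a row of a circulant Hadamard matrix of order 4m²). Then the Hamming weight of X equals 2m² - m or 2m² + m. -/

import Mathlib

/-- A ±1 sequence of length `n`. -/
def IsPM (n : ℕ) (X : ZMod n → ℤ) : Prop := ∀ i, X i = 1 ∨ X i = -1

/-- The Hamming weight: the number of indices where the sequence is `1`. -/
noncomputable def wt (n : ℕ) (X : ZMod n → ℤ) : ℕ := {i | X i = 1}.ncard

/-- The periodic autocorrelation of `X` at shift `k`: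
`P_X(k) = Σ_{i=0}^{n-1} (X i) * (X (i + k))`, indices modulo `n`. -/
def pac (n : ℕ) (X : ZMod n → ℤ) (k : ℤ) : ℤ :=
  ∑ i ∈ Finset.range n, X (i : ZMod n) * X ((i : ZMod n) + (k : ZMod n))

lemma aux_sq (n : ℕ) (hn0 : 0 < n) (X : ZMod n → ℤ) (hX : IsPM n X)
    (hH : ∀ k : ℤ, 1 ≤ k → k ≤ (n : ℤ) - 1 → pac n X k = 0) :
    (2 * (wt n X : ℤ) - (n : ℤ)) ^ 2 = (n : ℤ) := by
  haveI : NeZero n := ⟨hn0.ne'⟩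
  have hsum : ∀ g : ZMod n → ℤ,
      ∑ i ∈ Finset.range n, g (i : ZMod n) = ∑ a : ZMod n, g a := by
    intro g
    apply Finset.sum_nbij' (i := fun i => ((i : ℕ) : ZMod n)) (j := fun a => a.val)
    · intro a _; exact Finset.mem_univ _
    · intro a _; exact Finset.mem_range.mpr (ZMod.val_lt a)
    · intro a ha; exact ZMod.val_cast_of_lt (Finset.mem_range.mp ha)
    · intro a _; exact ZMod.natCast_rightInverse a
    · intro a _; rfl
  set S : ℤ := ∑ i : ZMod n, X i with hS
  have key : ∀ k : ZMod n, (∑ i : ZMod n, X i * X (i + k)) = pac n X (k.val) := by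
    intro k
    rw [pac]
    have h1 : (((k.val : ℤ) : ZMod n)) = k := by
      rw [Int.cast_natCast]; exact ZMod.natCast_rightInverse k
    rw [h1, hsum (fun i => X i * X (i + k))]
  have hsq : S * S = ∑ k : ZMod n, ∑ i : ZMod n, X i * X (i + k) := by
    rw [Finset.sum_comm, hS, Finset.sum_mul_sum]
    apply Finset.sum_congr rfl
    intro i _
    exact (Fintype.sum_equiv (Equiv.addLeft i) (fun k => X i * X (i + k))
      (fun j => X i * X j) (fun k => rfl)).symm
  have hzero : ∀ k : ZMod n, k ≠ 0 → (∑ i : ZMod n, X i * X (i + k)) = 0 := by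
    intro k hk
    rw [key k]
    apply hH
    · have hne : k.val ≠ 0 := fun h => hk (by rwa [← ZMod.val_eq_zero])
      exact_mod_cast Nat.one_le_iff_ne_zero.mpr hne
    · have := ZMod.val_lt k
      omega
  have hdiag : (∑ i : ZMod n, X i * X (i + 0)) = (n : ℤ) := by
    have h1 : ∀ i : ZMod n, X i * X (i + 0) = 1 := by
      intro i; rw [add_zero]; rcases hX i with h | h <;> simp [h]
    rw [Finset.sum_congr rfl (fun i _ => h1 i), Finset.sum_const, Finset.card_univ,
      ZMod.card]
    simp
  have hSS : S * S = (n : ℤ) := by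
    rw [hsq, Finset.sum_eq_single 0 (fun k _ hk => hzero k hk) (by simp)]
    exact hdiag
  set F := Finset.univ.filter (fun i : ZMod n => X i = 1) with hF
  set G := Finset.univ.filter (fun i : ZMod n => ¬ X i = 1) with hG
  have hwt : (wt n X : ℤ) = (F.card : ℤ) := by
    have h : {i : ZMod n | X i = 1} = (F : Set (ZMod n)) := by
      ext i; simp [hF]
    rw [wt, h, Set.ncard_coe_finset]
  have hScard : S = 2 * (F.card : ℤ) - n := by
    rw [hS, ← Finset.sum_filter_add_sum_filter_not Finset.univ (fun i : ZMod n => X i = 1)]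
    have h1 : ∑ i ∈ F, X i = (F.card : ℤ) := by
      rw [Finset.sum_congr rfl (fun i hi => (Finset.mem_filter.mp hi).2)]
      simp [hF]
    have hG1 : ∀ i ∈ G, X i = -1 := fun i hi =>
      (hX i).resolve_left (Finset.mem_filter.mp hi).2
    have h2 : ∑ i ∈ G, X i = -(G.card : ℤ) := by
      rw [Finset.sum_congr rfl hG1]; simp
    rw [← hF, ← hG, h1, h2]
    have hc : F.card + G.card = n := by
      rw [hF, hG, Finset.card_filter_add_card_filter_not, Finset.card_univ,
        ZMod.card]
    omega
  rw [hwt, ← hScard, sq, hSS]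

theorem stmt10 (m : ℕ) (hm : 0 < m)
    (X : ZMod (4 * m ^ 2) → ℤ) (hX : IsPM (4 * m ^ 2) X)
    (hH : ∀ k : ℤ, 1 ≤ k → k ≤ 4 * (m : ℤ) ^ 2 - 1 → pac (4 * m ^ 2) X k = 0) :
    (wt (4 * m ^ 2) X : ℤ) = 2 * (m : ℤ) ^ 2 - m ∨
      (wt (4 * m ^ 2) X : ℤ) = 2 * (m : ℤ) ^ 2 + m := by
  have h := aux_sq (4 * m ^ 2) (by positivity) X hX (by
    intro k h1 h2
    exact hH k h1 (by push_cast at h2 ⊢; linarith))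
  have h4 : (2 * (wt (4 * m ^ 2) X : ℤ) - ((4 * m ^ 2 : ℕ) : ℤ)) ^ 2
      = (2 * (m : ℤ)) ^ 2 := by rw [h]; push_cast; ring
  have hn : ((4 * m ^ 2 : ℕ) : ℤ) = 4 * (m : ℤ) ^ 2 := by push_cast; ring
  rcases sq_eq_sq_iff_eq_or_eq_neg.mp h4 with hcase | hcase <;> rw [hn] at hcase
  · right; linarith
  · left; linarith
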